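/- arXiv:1504.04557 — 2 statements merged into one kernel-verified Lean document; each statement's English description precedes it below -/
import Mathlib

section
/- In Y_{d,n}^aff(q), define X_{i+1} := g_i X_i g_i recursively for i = 1,...,n-1. Then the elements t_1,...,t_n, X_1^{±1},...,X_n^{±1} pairwise commute. -/
open LaurentPolynomial Finset

noncomputable section

/-- The ring `R = ℂ[q, q⁻¹]` of Laurent polynomials over `ℂ`. -/
abbrev Rq := LaurentPolynomial ℂ

/-- The indeterminate `q`. -/
def qq : Rq := T 1

/-- `q⁻¹`. -/
def qqinv : Rq := T (-1)

/-- The transposition `s_i = (i, i+1)` acting on the index `j`. -/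
def sAdj (i j : ℕ) : ℕ := if j = i then i + 1 else if j = i + 1 then i else j

/-- The transposition `s_{i,l} = (i, l)` acting on the index `j`. -/
def sTrp (i l j : ℕ) : ℕ := if j = i then l else if j = l then i else j

/-- A realisation of the defining presentation of the affine Yokonuma--Hecke
algebra `Y_{d,n}^aff(q)` inside an `R`-algebra `A`:  elements
`t_1, …, t_n`, `g_1, …, g_{n-1}`, `X_1, X_1⁻¹` (together with the derived
elements `X_2, …, X_n` given by `X_{i+1} = g_i X_i g_i` and their inverses)
satisfying the defining relations (br1), (br2), (fr1)–(fr3), (aff1)–(aff3)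
and (quad). -/
structure YHAff (A : Type*) [Ring A] [Algebra Rq A] (d n : ℕ) where
  t : ℕ → A
  g : ℕ → A
  X : ℕ → A
  Xinv : ℕ → A
  br1 : ∀ i j, 1 ≤ i → i ≤ n - 1 → 1 ≤ j → j ≤ n - 1 → (i + 1 < j ∨ j + 1 < i) →
    g i * g j = g j * g i
  br2 : ∀ i, 1 ≤ i → i ≤ n - 2 → g i * g (i + 1) * g i = g (i + 1) * g i * g (i + 1)
  fr1 : ∀ i j, 1 ≤ i → i ≤ n → 1 ≤ j → j ≤ n → t i * t j = t j * t i
  fr2 : ∀ i j, 1 ≤ i → i ≤ n - 1 → 1 ≤ j → j ≤ n → g i * t j = t (sAdj i j) * g i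
  fr3 : ∀ j, 1 ≤ j → j ≤ n → t j ^ d = 1
  aff1 : X 1 * (g 1 * X 1 * g 1) = g 1 * X 1 * g 1 * X 1
  aff2 : ∀ i, 2 ≤ i → i ≤ n - 1 → X 1 * g i = g i * X 1
  aff3 : ∀ j, 1 ≤ j → j ≤ n → X 1 * t j = t j * X 1
  quad : ∀ i, 1 ≤ i → i ≤ n - 1 → g i ^ 2 =
    1 + algebraMap Rq A (qq - qqinv) *
      (algebraMap Rq A (C (d : ℂ)⁻¹) * ∑ k ∈ range d, t i ^ k * t (i + 1) ^ (d - k)) * g i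
  Xrec : ∀ i, 1 ≤ i → i ≤ n - 1 → X (i + 1) = g i * X i * g i
  XXinv : ∀ i, 1 ≤ i → i ≤ n → X i * Xinv i = 1
  XinvX : ∀ i, 1 ≤ i → i ≤ n → Xinv i * X i = 1

variable {A : Type*} [Ring A] [Algebra Rq A] {d n : ℕ}

/-- The idempotent `e_i = (1/d) ∑_{k=0}^{d-1} t_i^k t_{i+1}^{d-k}`. -/
def YHAff.e (Y : YHAff A d n) (i : ℕ) : A :=
  algebraMap Rq A (C (d : ℂ)⁻¹) * ∑ k ∈ range d, Y.t i ^ k * Y.t (i + 1) ^ (d - k)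

/-- The idempotent `e_{i,l} = (1/d) ∑_{k=0}^{d-1} t_i^k t_l^{d-k}`. -/
def YHAff.eil (Y : YHAff A d n) (i l : ℕ) : A :=
  algebraMap Rq A (C (d : ℂ)⁻¹) * ∑ k ∈ range d, Y.t i ^ k * Y.t l ^ (d - k)

/-- The scalar `q - q⁻¹` viewed inside `A`. -/
def cq (A : Type*) [Ring A] [Algebra Rq A] : A := algebraMap Rq A (qq - qqinv)

/-- `X_i^a` for `a : ℤ`, via `Xinv` for negative exponents. -/
def YHAff.zp (Y : YHAff A d n) (i : ℕ) (a : ℤ) : A :=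
  if 0 ≤ a then Y.X i ^ a.toNat else Y.Xinv i ^ (-a).toNat

/- ### Auxiliary lemmas -/

lemma tw2 {a b a' b' : A} (h : a * b = a' * b') (z : A) :
    a * (b * z) = a' * (b' * z) := by
  rw [← mul_assoc, h, mul_assoc]

lemma tw3 {a b c a' b' c' : A} (h : a * b * c = a' * b' * c') (z : A) :
    a * (b * (c * z)) = a' * (b' * (c' * z)) := by
  rw [← mul_assoc, ← mul_assoc, h, mul_assoc, mul_assoc]

lemma tw4 {a b c d₀ a' b' c' d' : A} (h : a * b * c * d₀ = a' * b' * c' * d') (z : A) :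
    a * (b * (c * (d₀ * z))) = a' * (b' * (c' * (d' * z))) := by
  rw [← mul_assoc, ← mul_assoc, ← mul_assoc, h, mul_assoc, mul_assoc, mul_assoc]

/-- If `a` is a two-sided unit commuting with `b`, its inverse commutes with `b`. -/
lemma invc {a a' b : A} (h1 : a * a' = 1) (h2 : a' * a = 1) (h : a * b = b * a) :
    a' * b = b * a' := by
  calc a' * b = a' * (b * (a * a')) := by rw [h1, mul_one]
    _ = a' * ((b * a) * a') := by rw [mul_assoc]
    _ = a' * ((a * b) * a') := by rw [← h]
    _ = (a' * a) * (b * a') := by rw [mul_assoc a b a', ← mul_assoc]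
    _ = b * a' := by rw [h2, one_mul]

lemma sAdj_invol (i j : ℕ) : sAdj i (sAdj i j) = j := by
  unfold sAdj; split_ifs <;> omega

lemma sAdj_ge (i j : ℕ) (hi : 1 ≤ i) (hj : 1 ≤ j) : 1 ≤ sAdj i j := by
  unfold sAdj; split_ifs <;> omega

lemma sAdj_le (i j : ℕ) (hi1 : 1 ≤ i) (hi2 : i ≤ n - 1) (hj : j ≤ n) (hn : 1 ≤ n) :
    sAdj i j ≤ n := by
  unfold sAdj; split_ifs <;> omega

/-- `X_i` commutes with every `t_j`. -/
lemma YHAff.Xt (Y : YHAff A d n) : ∀ i, 1 ≤ i → i ≤ n → ∀ j, 1 ≤ j → j ≤ n →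
    Y.X i * Y.t j = Y.t j * Y.X i := by
  intro i
  induction i with
  | zero => intro h; exact absurd h (by omega)
  | succ m ih =>
    intro _ h2 j hj1 hj2
    by_cases hm : m = 0
    · subst hm; exact Y.aff3 j hj1 hj2
    · have hm1 : 1 ≤ m := by omega
      have hm2 : m ≤ n - 1 := by omega
      have hs1 : 1 ≤ sAdj m j := sAdj_ge m j hm1 hj1
      have hs2 : sAdj m j ≤ n := sAdj_le m j hm1 hm2 hj2 (by omega)
      have hA := Y.fr2 m j hm1 hm2 hj1 hj2
      have hB := Y.fr2 m (sAdj m j) hm1 hm2 hs1 hs2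
      rw [sAdj_invol] at hB
      have hC := ih hm1 (by omega) (sAdj m j) hs1 hs2
      rw [Y.Xrec m hm1 hm2]
      simp only [mul_assoc]
      rw [hA, tw2 hC, tw2 hB]

/-- `g_k` commutes with `X_j` when `j ∉ {k, k+1}`. -/
lemma YHAff.gX (Y : YHAff A d n) : ∀ j k, 1 ≤ k → k ≤ n - 1 → 1 ≤ j → j ≤ n →
    j ≠ k → j ≠ k + 1 → Y.g k * Y.X j = Y.X j * Y.g k := by
  intro j
  induction j using Nat.strong_induction_on with
  | _ j ih =>
    intro k hk1 hk2 hj1 hj2 hne1 hne2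
    rcases j with _ | m
    · exact absurd hj1 (by omega)
    by_cases hm0 : m = 0
    · subst hm0
      exact (Y.aff2 k (by omega) hk2).symm
    · have hm1 : 1 ≤ m := by omega
      have hm2 : m ≤ n - 1 := by omega
      by_cases hsp : m = k + 1
      · -- special case j = k + 2 : use the braid relation
        subst hsp
        have hkn : k + 2 ≤ n := by omega
        have hbr := Y.br2 k hk1 (by omega)
        have hbx := ih k (by omega) (k+1) (by omega) (by omega) hk1 (by omega)
          (by omega) (by omega)
        rw [Y.Xrec (k+1) (by omega) (by omega), Y.Xrec k hk1 (by omega)]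
        simp only [mul_assoc]
        have hbr' : Y.g k * (Y.g (k+1) * Y.g k) = Y.g (k+1) * (Y.g k * Y.g (k+1)) := by
          rw [← mul_assoc, ← mul_assoc, hbr]
        conv_lhs => rw [tw3 hbr, tw2 hbx]
        conv_rhs => rw [hbr']
      · -- generic case : `g_k` commutes with `g_m` and with `X_m`
        have hcond : m + 1 < k ∨ k + 1 < m := by omega
        have hbr := Y.br1 k m hk1 hk2 hm1 hm2 (by omega)
        have hgx := ih m (by omega) k hk1 hk2 hm1 (by omega) (by omega) (by omega)
        rw [Y.Xrec m hm1 hm2]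
        simp only [mul_assoc]
        rw [tw2 hbr, tw2 hgx, hbr]

/-- Adjacent `X`'s commute. -/
lemma YHAff.XXadj (Y : YHAff A d n) : ∀ j, 1 ≤ j → j ≤ n - 1 →
    Y.X j * Y.X (j + 1) = Y.X (j + 1) * Y.X j := by
  intro j
  induction j with
  | zero => intro h; exact absurd h (by omega)
  | succ m ih =>
    intro h1 h2
    by_cases hm : m = 0
    · subst hm
      simp only [Nat.zero_add] at h2 ⊢
      rw [Y.Xrec 1 le_rfl h2]
      exact Y.aff1
    · have hm1 : 1 ≤ m := by omega
      have hmn : m + 2 ≤ n := by omega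
      have hbr := Y.br2 m hm1 (by omega)
      have hbr' : Y.g m * (Y.g (m+1) * Y.g m) = Y.g (m+1) * (Y.g m * Y.g (m+1)) := by
        rw [← mul_assoc, ← mul_assoc, hbr]
      have hbx := Y.gX m (m+1) (by omega) (by omega) hm1 (by omega) (by omega) (by omega)
      have hI4 := ih hm1 (by omega)
      rw [Y.Xrec m hm1 (by omega)] at hI4
      simp only [← mul_assoc] at hI4
      -- hI4 : X m * g m * X m * g m = g m * X m * g m * X m
      rw [Y.Xrec (m+1) (by omega) h2, Y.Xrec m hm1 (by omega)]
      simp only [mul_assoc]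
      -- letters: a = g m, b = g (m+1), x = X m
      -- LHS = a x a b a x a b,  RHS = b a x a b a x a
      conv_lhs => rw [tw3 hbr, tw2 hbx, tw2 hbx.symm]
      -- LHS is now  a b x a x b a b
      conv_rhs => rw [tw3 hbr, tw2 hbx, tw2 hbx.symm, tw3 hbr.symm,
        tw4 hI4.symm, hbr']
      -- RHS is now  a b x a x b a b as well

/-- All the `X`'s commute. -/
lemma YHAff.XXlt (Y : YHAff A d n) : ∀ j i, 1 ≤ i → i < j → j ≤ n →
    Y.X i * Y.X j = Y.X j * Y.X i := by
  intro j
  induction j with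
  | zero => intro i _ h; exact absurd h (by omega)
  | succ m ih =>
    intro i hi1 hij hjn
    by_cases him : i = m
    · subst him
      exact Y.XXadj i hi1 (by omega)
    · have him' : i < m := by omega
      have hm1 : 1 ≤ m := by omega
      have hg := Y.gX i m hm1 (by omega) hi1 (by omega) (by omega) (by omega)
      have hx := ih i hi1 him' (by omega)
      rw [Y.Xrec m hm1 (by omega)]
      simp only [mul_assoc]
      rw [tw2 hg.symm, tw2 hx, ← hg]

lemma YHAff.XX (Y : YHAff A d n) (i j : ℕ) (hi1 : 1 ≤ i) (hi2 : i ≤ n)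
    (hj1 : 1 ≤ j) (hj2 : j ≤ n) : Y.X i * Y.X j = Y.X j * Y.X i := by
  rcases lt_trichotomy i j with h | h | h
  · exact Y.XXlt j i hi1 h hj2
  · rw [h]
  · exact (Y.XXlt i j hj1 h hi2).symm

/-- In `Y_{d,n}^aff(q)`, the elements `t_1, …, t_n, X_1^{±1}, …, X_n^{±1}`
form a commutative family. -/
theorem stmt5 {A : Type*} [Ring A] [Algebra Rq A] {d n : ℕ} (hd : 0 < d)
    (Y : YHAff A d n) (i j : ℕ) (hi1 : 1 ≤ i) (hi2 : i ≤ n)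
    (hj1 : 1 ≤ j) (hj2 : j ≤ n) :
    Y.t i * Y.t j = Y.t j * Y.t i ∧
    Y.X i * Y.X j = Y.X j * Y.X i ∧
    Y.X i * Y.t j = Y.t j * Y.X i ∧
    Y.Xinv i * Y.X j = Y.X j * Y.Xinv i ∧
    Y.Xinv i * Y.t j = Y.t j * Y.Xinv i ∧
    Y.Xinv i * Y.Xinv j = Y.Xinv j * Y.Xinv i := by
  have htt := Y.fr1 i j hi1 hi2 hj1 hj2
  have hXX := Y.XX i j hi1 hi2 hj1 hj2
  have hXt := Y.Xt i hi1 hi2 j hj1 hj2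
  have hiX : Y.Xinv i * Y.X j = Y.X j * Y.Xinv i :=
    invc (Y.XXinv i hi1 hi2) (Y.XinvX i hi1 hi2) hXX
  have hit : Y.Xinv i * Y.t j = Y.t j * Y.Xinv i :=
    invc (Y.XXinv i hi1 hi2) (Y.XinvX i hi1 hi2) hXt
  have hjX : Y.Xinv j * Y.X i = Y.X i * Y.Xinv j :=
    invc (Y.XXinv j hj1 hj2) (Y.XinvX j hj1 hj2) (Y.XX j i hj1 hj2 hi1 hi2)
  have hii : Y.Xinv i * Y.Xinv j = Y.Xinv j * Y.Xinv i :=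
    invc (Y.XXinv i hi1 hi2) (Y.XinvX i hi1 hi2) hjX.symm
  exact ⟨htt, hXX, hXt, hiX, hit, hii⟩
end
end

section
/- Let T = (Z/dZ)^n with generators t_1,...,t_n. In C[T], for any t ∈ T, any τ ∈ T, and any i,l ∈ {1,...,n}, one has τ t s_{i,l}(τ^{-1}) e_{i,l} = t e_{i,l}, where s_{i,l}(τ^{-1}) denotes the image of τ^{-1} under the transposition (i,l) permuting coordinates, and e_{i,l} := (1/d) Σ_{k=0}^{d-1} t_i^k t_l^{d-k}. -/
open Finset

noncomputable section

/-- The group `T = (ℤ/dℤ)^n` (written multiplicatively). -/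
abbrev Tgr (d n : ℕ) := Fin n → Multiplicative (ZMod d)

/-- The standard generator `t_j` of `(ℤ/dℤ)^n`. -/
def tgen (d n : ℕ) (j : Fin n) : Tgr d n :=
  fun k => Multiplicative.ofAdd (if k = j then (1 : ZMod d) else 0)

/-- The complex group algebra `ℂ[(ℤ/dℤ)^n]`. -/
abbrev CT (d n : ℕ) := MonoidAlgebra ℂ (Tgr d n)

/-- The generator `t_j` inside the group algebra. -/
def tC (d n : ℕ) (j : Fin n) : CT d n := MonoidAlgebra.of ℂ (Tgr d n) (tgen d n j)

/-- The element `e_{i,l} = (1/d) ∑_{k=0}^{d-1} t_i^k t_l^{d-k}` of `ℂ[(ℤ/dℤ)^n]`. -/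
def eC (d n : ℕ) (i l : Fin n) : CT d n :=
  (d : ℂ)⁻¹ • ∑ k ∈ range d, tC d n i ^ k * tC d n l ^ (d - k)


def fel (d n : ℕ) (i l : Fin n) (a : ZMod d) : Tgr d n :=
  fun k => Multiplicative.ofAdd ((if k = i then a else 0) + (if k = l then -a else 0))

lemma fel_add (d n : ℕ) (i l : Fin n) (a b : ZMod d) :
    fel d n i l (a + b) = fel d n i l a * fel d n i l b := by
  funext k
  simp only [fel, Pi.mul_apply, ← ofAdd_add]
  congr 1
  split_ifs <;> ring

lemma tgen_pow (d n : ℕ) (j : Fin n) (k : ℕ) :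
    tgen d n j ^ k = fun m => Multiplicative.ofAdd (if m = j then (k : ZMod d) else 0) := by
  induction k with
  | zero => funext m; simp [tgen]
  | succ k ih =>
    funext m
    simp only [pow_succ, Pi.mul_apply, ih, tgen, ← ofAdd_add]
    congr 1
    split_ifs <;> push_cast <;> ring

lemma key (d n : ℕ) (i l : Fin n) (k : ℕ) (hk : k ≤ d) :
    tgen d n i ^ k * tgen d n l ^ (d - k) = fel d n i l (k : ZMod d) := by
  funext m
  simp only [tgen_pow, Pi.mul_apply, fel, ← ofAdd_add]
  congr 1
  have : ((d - k : ℕ) : ZMod d) = -(k : ZMod d) := by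
    rw [Nat.cast_sub hk]; simp
  split_ifs <;> simp [this]

lemma sum_range_zmod {d : ℕ} [NeZero d] {M : Type*} [AddCommMonoid M] (g : ZMod d → M) :
    ∑ k ∈ range d, g (k : ZMod d) = ∑ x : ZMod d, g x := by
  refine Finset.sum_nbij' (fun k => (k : ZMod d)) (fun x => x.val) ?_ ?_ ?_ ?_ ?_
  · intro k hk; exact Finset.mem_univ _
  · intro x _; simpa using ZMod.val_lt x
  · intro k hk; exact ZMod.val_natCast_of_lt (Finset.mem_range.mp hk)
  · intro x _; exact ZMod.natCast_rightInverse x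
  · intro k _; rfl

lemma eC_eq {d n : ℕ} [NeZero d] (i l : Fin n) :
    eC d n i l = (d : ℂ)⁻¹ • ∑ x : ZMod d, MonoidAlgebra.of ℂ (Tgr d n) (fel d n i l x) := by
  rw [eC, ← sum_range_zmod]
  congr 1
  refine Finset.sum_congr rfl fun k hk => ?_
  rw [tC, tC, ← map_pow, ← map_pow, ← map_mul, key d n i l k (Finset.mem_range.mp hk).le]

lemma fel_mul_eC {d n : ℕ} [NeZero d] (i l : Fin n) (a : ZMod d) :
    MonoidAlgebra.of ℂ (Tgr d n) (fel d n i l a) * eC d n i l = eC d n i l := by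
  rw [eC_eq, mul_smul_comm, Finset.mul_sum]
  congr 1
  have : ∀ x : ZMod d, MonoidAlgebra.of ℂ (Tgr d n) (fel d n i l a) *
      MonoidAlgebra.of ℂ (Tgr d n) (fel d n i l x) =
      MonoidAlgebra.of ℂ (Tgr d n) (fel d n i l (a + x)) := by
    intro x; rw [fel_add, map_mul]
  simp only [this]
  exact Fintype.sum_equiv (Equiv.addLeft a) _ _ (fun x => rfl)

/-- In `ℂ[(ℤ/dℤ)^n]`:  `τ t s_{i,l}(τ⁻¹) e_{i,l} = t e_{i,l}`, where
`s_{i,l}(τ⁻¹) = τ⁻¹ ∘ (i,l)` is the image of `τ⁻¹` under the transposition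
`(i,l)` permuting the coordinates. -/
theorem stmt15 {d n : ℕ} (hd : 0 < d) (t τ : Tgr d n) (i l : Fin n) :
    MonoidAlgebra.of ℂ (Tgr d n) (τ * t * (τ⁻¹ ∘ ⇑(Equiv.swap i l))) * eC d n i l =
    MonoidAlgebra.of ℂ (Tgr d n) t * eC d n i l := by
  haveI : NeZero d := ⟨hd.ne'⟩
  have hσ : τ * (τ⁻¹ ∘ ⇑(Equiv.swap i l)) =
      fel d n i l (Multiplicative.toAdd (τ i) - Multiplicative.toAdd (τ l)) := by
    funext m
    simp only [Pi.mul_apply, Function.comp_apply, Pi.inv_apply, fel]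
    rcases eq_or_ne m i with rfl | hmi
    · rcases eq_or_ne m l with rfl | hml
      · simp [Equiv.swap_apply_left]
      · simp [Equiv.swap_apply_left, hml]
        rw [← ofAdd_toAdd (τ m * (τ l)⁻¹)]
        congr 1
        simp [sub_eq_add_neg]
    · rcases eq_or_ne m l with rfl | hml
      · simp [Equiv.swap_apply_right, hmi]
        rw [← ofAdd_toAdd (τ m * (τ i)⁻¹)]
        congr 1
        simp; ring
      · simp [Equiv.swap_apply_of_ne_of_ne hmi hml, hmi, hml]
  have h2 : τ * t * (τ⁻¹ ∘ ⇑(Equiv.swap i l)) = t * (τ * (τ⁻¹ ∘ ⇑(Equiv.swap i l))) := by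
    rw [mul_comm τ t, mul_assoc]
  rw [h2, hσ, map_mul, mul_assoc, fel_mul_eC]

end
end
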